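/- arXiv:2209.04049 — 2 statements merged into one kernel-verified Lean document; each statement's English description precedes it below -/
import Mathlib

section
/- (Completeness via generalization) Let X be a finite set, F a set of probability mass functions on X, and define the equivalence x ~ x' iff f(x) = f(x') for all f ∈ F. Suppose the ground truth p* ∈ F has support V, the dataset support S ⊆ V meets every ~-equivalence class that meets V, and no two points of S lie in the same class. If p̂ maximizes Σ_x q(x) log p(x) over p ∈ F (q uniform on S), and every f ∈ F is constant on each equivalence class, then p̂(x) > 0 for every x ∈ V. -/
open Real Finset

private lemma ereal_coe_sum {X : Type*} [DecidableEq X] (s : Finset X) (f : X → ℝ) :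
    ((∑ x ∈ s, f x : ℝ) : EReal) = ∑ x ∈ s, ((f x : ℝ) : EReal) := by
  induction s using Finset.induction_on with
  | empty => simp
  | insert _ _ h ih => rw [Finset.sum_insert h, Finset.sum_insert h, EReal.coe_add, ih]

/-- Extended-real expected log-likelihood of `p` under `q`, where terms with
`q x > 0` and `p x = 0` are interpreted as `−∞`. -/
noncomputable def eloglik {X : Type*} [Fintype X] (q p : X → ℝ) : EReal :=
  ∑ x, if 0 < q x ∧ p x = 0 then (⊥ : EReal) else ((q x * Real.log (p x) : ℝ) : EReal)

theorem generalization_makes_complete {X : Type*} [Fintype X] [DecidableEq X]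
    (F : Set (X → ℝ))
    (hF : ∀ f ∈ F, (∀ x, 0 ≤ f x) ∧ ∑ x, f x = 1)
    -- the equivalence: x ~ x' iff all members of F agree on them
    (equiv : X → X → Prop) (hequiv : ∀ x x', equiv x x' ↔ ∀ f ∈ F, f x = f x')
    (pstar : X → ℝ) (hpstarF : pstar ∈ F)
    (V : Set X) (hV : V = {x | 0 < pstar x})
    (S : Finset X) (hSne : S.Nonempty) (hSV : ↑S ⊆ V)
    -- S meets every equivalence class meeting V
    (hcover : ∀ x ∈ V, ∃ s ∈ S, equiv x s)
    -- no two points of S lie in the same class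
    (hsep : ∀ s ∈ S, ∀ s' ∈ S, equiv s s' → s = s')
    -- every f ∈ F is constant on each equivalence class
    (hconst : ∀ f ∈ F, ∀ x x', equiv x x' → f x = f x')
    -- q is uniform on S
    (q : X → ℝ) (hq : ∀ x, q x = if x ∈ S then (1 : ℝ) / S.card else 0)
    (phat : X → ℝ) (hphatF : phat ∈ F)
    (hmax : ∀ p ∈ F, eloglik q p ≤ eloglik q phat) :
    ∀ x ∈ V, 0 < phat x := by
  -- q is positive exactly on S
  have hqpos : ∀ s ∈ S, 0 < q s := by
    intro s hs
    rw [hq s, if_pos hs]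
    positivity
  have hqzero : ∀ x, x ∉ S → q x = 0 := by
    intro x hx; rw [hq x, if_neg hx]
  -- eloglik q pstar is not ⊥
  have hpstar_ne : eloglik q pstar ≠ ⊥ := by
    unfold eloglik
    have : ∀ x : X, (if 0 < q x ∧ pstar x = 0 then (⊥ : EReal)
        else ((q x * Real.log (pstar x) : ℝ) : EReal))
        = ((q x * Real.log (pstar x) : ℝ) : EReal) := by
      intro x
      rw [if_neg]
      rintro ⟨hq0, hp0⟩
      by_cases hxS : x ∈ S
      · have : x ∈ V := hSV hxS
        rw [hV] at this
        exact absurd hp0 (ne_of_gt this)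
      · rw [hqzero x hxS] at hq0; exact lt_irrefl 0 hq0
    rw [Finset.sum_congr rfl (fun x _ => this x)]
    rw [← ereal_coe_sum]
    exact EReal.coe_ne_bot _
  have hphat_ne : eloglik q phat ≠ ⊥ := by
    intro h
    exact hpstar_ne (le_bot_iff.mp (h ▸ hmax pstar hpstarF))
  -- phat positive on S
  have hS : ∀ s ∈ S, 0 < phat s := by
    intro s hs
    rcases (hF phat hphatF).1 s |>.lt_or_eq with h | h
    · exact h
    · exfalso
      apply hphat_ne
      unfold eloglik
      rw [← Finset.add_sum_erase _ _ (Finset.mem_univ s),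
        if_pos ⟨hqpos s hs, h.symm⟩, EReal.bot_add]
  intro x hx
  obtain ⟨s, hs, hes⟩ := hcover x hx
  rw [hconst phat hphatF x s hes]
  exact hS s hs
end

section
/- (Maximum entropy characterization of the Gaussian) Among all probability density functions p on ℝ with mean μ and variance σ², the differential entropy −∫ p log p is maximized uniquely (a.e.) by the Gaussian density N(μ, σ). -/
open Real MeasureTheory

noncomputable def gaussianPdf (μ σ : ℝ) (x : ℝ) : ℝ :=
  (1 / Real.sqrt (2 * π * σ ^ 2)) * Real.exp (-(x - μ) ^ 2 / (2 * σ ^ 2))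

lemma maxent_integrable_sq_mul_gauss {b : ℝ} (hb : 0 < b) :
    Integrable fun x : ℝ => x ^ 2 * Real.exp (-b * x ^ 2) := by
  have := integrable_rpow_mul_exp_neg_mul_sq hb (s := 2) (by norm_num)
  have h2 : ∀ x : ℝ, x ^ (2 : ℝ) = x ^ 2 := fun x => by
    rw [show (2:ℝ) = ((2:ℕ):ℝ) by norm_num, Real.rpow_natCast]
  simpa [h2] using this

lemma maxent_integral_sq_mul_gauss {b : ℝ} (hb : 0 < b) :
    ∫ x : ℝ, x ^ 2 * Real.exp (-b * x ^ 2) = (1 / (2 * b)) * Real.sqrt (π / b) := by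
  have hderiv : ∀ x : ℝ, HasDerivAt (fun x : ℝ => x * Real.exp (-b * x ^ 2))
      (Real.exp (-b * x ^ 2) - (2 * b) * (x ^ 2 * Real.exp (-b * x ^ 2))) x := by
    intro x
    have h1 : HasDerivAt (fun x : ℝ => -b * x ^ 2) (-b * (2 * x)) x := by
      simpa using ((hasDerivAt_pow 2 x).const_mul (-b))
    have h2 := (h1.exp)
    have := (hasDerivAt_id x).fun_mul h2
    exact this.congr_deriv (by simp only [id_eq]; ring)
  have hf' : Integrable fun x : ℝ =>
      Real.exp (-b * x ^ 2) - (2 * b) * (x ^ 2 * Real.exp (-b * x ^ 2)) :=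
    (integrable_exp_neg_mul_sq hb).sub ((maxent_integrable_sq_mul_gauss hb).const_mul _)
  have hf : Integrable fun x : ℝ => x * Real.exp (-b * x ^ 2) :=
    integrable_mul_exp_neg_mul_sq hb
  have h0 := integral_eq_zero_of_hasDerivAt_of_integrable hderiv hf' hf
  rw [integral_sub (integrable_exp_neg_mul_sq hb)
      ((maxent_integrable_sq_mul_gauss hb).const_mul _),
    MeasureTheory.integral_const_mul, integral_gaussian] at h0
  have hb' : (2 * b) ≠ 0 := by positivity
  field_simp at h0 ⊢
  linarith

section gaussfacts
variable {μ σ : ℝ}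

lemma maxent_gauss_eq' (hσ : 0 < σ) (x : ℝ) :
    -(x - μ) ^ 2 / (2 * σ ^ 2) = -(1 / (2 * σ ^ 2)) * (x - μ) ^ 2 := by field_simp

lemma maxent_gpdf_pos (hσ : 0 < σ) (x : ℝ) : 0 < gaussianPdf μ σ x := by
  have h : (0:ℝ) < 2 * π * σ ^ 2 := by positivity
  unfold gaussianPdf
  positivity

lemma maxent_integrable_gpdf (hσ : 0 < σ) : Integrable (gaussianPdf μ σ) := by
  have hb : (0:ℝ) < 1 / (2 * σ ^ 2) := by positivity
  have h := (((integrable_exp_neg_mul_sq hb).comp_sub_right μ).const_mul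
    (1 / Real.sqrt (2 * π * σ ^ 2)))
  refine h.congr (Filter.Eventually.of_forall fun x => ?_)
  simp only [gaussianPdf]
  rw [maxent_gauss_eq' hσ]

lemma maxent_integral_gpdf (hσ : 0 < σ) : ∫ x : ℝ, gaussianPdf μ σ x = 1 := by
  have hb : (0:ℝ) < 1 / (2 * σ ^ 2) := by positivity
  have heq : ∀ x : ℝ, gaussianPdf μ σ x =
      (1 / Real.sqrt (2 * π * σ ^ 2)) * Real.exp (-(1 / (2 * σ ^ 2)) * (x - μ) ^ 2) := by
    intro x; unfold gaussianPdf; rw [maxent_gauss_eq' hσ]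
  simp_rw [heq]
  rw [MeasureTheory.integral_const_mul,
    integral_sub_right_eq_self (fun u : ℝ => Real.exp (-(1 / (2 * σ ^ 2)) * u ^ 2)) μ,
    integral_gaussian]
  have h1 : π / (1 / (2 * σ ^ 2)) = 2 * π * σ ^ 2 := by field_simp
  rw [h1]
  have h2 : (0:ℝ) < 2 * π * σ ^ 2 := by positivity
  field_simp

lemma maxent_integrable_sq_gpdf (hσ : 0 < σ) :
    Integrable fun x : ℝ => (x - μ) ^ 2 * gaussianPdf μ σ x := by
  have hb : (0:ℝ) < 1 / (2 * σ ^ 2) := by positivity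
  have h := ((maxent_integrable_sq_mul_gauss hb).comp_sub_right μ).const_mul
    (1 / Real.sqrt (2 * π * σ ^ 2))
  refine h.congr (Filter.Eventually.of_forall fun x => ?_)
  simp only [gaussianPdf]
  rw [maxent_gauss_eq' hσ]
  ring

lemma maxent_integral_sq_gpdf (hσ : 0 < σ) :
    ∫ x : ℝ, (x - μ) ^ 2 * gaussianPdf μ σ x = σ ^ 2 := by
  have hb : (0:ℝ) < 1 / (2 * σ ^ 2) := by positivity
  have heq : ∀ x : ℝ, (x - μ) ^ 2 * gaussianPdf μ σ x =
      (1 / Real.sqrt (2 * π * σ ^ 2)) *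
        ((x - μ) ^ 2 * Real.exp (-(1 / (2 * σ ^ 2)) * (x - μ) ^ 2)) := by
    intro x; unfold gaussianPdf; rw [maxent_gauss_eq' hσ]; ring
  simp_rw [heq]
  rw [MeasureTheory.integral_const_mul,
    integral_sub_right_eq_self (fun u : ℝ => u ^ 2 * Real.exp (-(1 / (2 * σ ^ 2)) * u ^ 2)) μ,
    maxent_integral_sq_mul_gauss hb]
  have h1 : π / (1 / (2 * σ ^ 2)) = 2 * π * σ ^ 2 := by field_simp
  rw [h1]
  have h2 : (0:ℝ) < 2 * π * σ ^ 2 := by positivity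
  rw [show (1:ℝ) / (2 * (1 / (2 * σ ^ 2))) = σ ^ 2 by field_simp]
  have h3 : Real.sqrt (2 * π * σ ^ 2) ≠ 0 := by positivity
  field_simp

lemma maxent_log_gpdf (hσ : 0 < σ) (x : ℝ) :
    Real.log (gaussianPdf μ σ x) =
      -Real.log (Real.sqrt (2 * π * σ ^ 2)) - (x - μ) ^ 2 / (2 * σ ^ 2) := by
  have h2 : (0:ℝ) < 2 * π * σ ^ 2 := by positivity
  have h3 : (0:ℝ) < Real.sqrt (2 * π * σ ^ 2) := Real.sqrt_pos.mpr h2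
  unfold gaussianPdf
  rw [Real.log_mul (by positivity) (Real.exp_ne_zero _), Real.log_exp,
    Real.log_div one_ne_zero (ne_of_gt h3), Real.log_one]
  ring

end gaussfacts

lemma maxent_key_ineq {t s : ℝ} (ht : 0 ≤ t) (hs : 0 < s) :
    0 ≤ t * Real.log t - t * Real.log s - t + s ∧
      (t * Real.log t - t * Real.log s - t + s = 0 ↔ t = s) := by
  rcases eq_or_lt_of_le ht with h0 | htpos
  · constructor
    · simp [← h0]; linarith
    · simp [← h0]
      constructor
      · intro h; linarith
      · intro h; linarith
  · have hlog := Real.log_le_sub_one_of_pos (show (0:ℝ) < s / t by positivity)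
    rw [Real.log_div (ne_of_gt hs) (ne_of_gt htpos)] at hlog
    have hle : 0 ≤ t * Real.log t - t * Real.log s - t + s := by
      have := mul_le_mul_of_nonneg_left hlog (le_of_lt htpos)
      have h2 : t * (s / t - 1) = s - t := by field_simp
      nlinarith [htpos]
    refine ⟨hle, ?_, ?_⟩
    · intro heq
      by_contra hne
      have hne' : s / t ≠ 1 := by
        intro h; apply hne
        field_simp at h; linarith
      have hstrict := Real.log_lt_sub_one_of_pos (show (0:ℝ) < s / t by positivity) hne'
      rw [Real.log_div (ne_of_gt hs) (ne_of_gt htpos)] at hstrict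
      have := mul_lt_mul_of_pos_left hstrict htpos
      have h2 : t * (s / t - 1) = s - t := by field_simp
      nlinarith
    · intro h; subst h; ring

theorem gaussian_maximizes_entropy (μ σ : ℝ) (hσ : 0 < σ)
    (p : ℝ → ℝ) (hmeas : Measurable p) (hp0 : ∀ x, 0 ≤ p x)
    (hint : Integrable p) (h1 : ∫ x, p x = 1)
    (hxint : Integrable (fun x => x * p x)) (hmean : ∫ x, x * p x = μ)
    (hvint : Integrable (fun x => (x - μ) ^ 2 * p x))
    (hvar : ∫ x, (x - μ) ^ 2 * p x = σ ^ 2)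
    (hent : Integrable (fun x => p x * Real.log (p x))) :
    (-∫ x, p x * Real.log (p x)) ≤
        -∫ x, gaussianPdf μ σ x * Real.log (gaussianPdf μ σ x) ∧
      ((-∫ x, p x * Real.log (p x)) =
          -∫ x, gaussianPdf μ σ x * Real.log (gaussianPdf μ σ x) ↔
        p =ᵐ[volume] gaussianPdf μ σ) := by
  set q : ℝ → ℝ := gaussianPdf μ σ with hq_def
  set c : ℝ := Real.log (Real.sqrt (2 * π * σ ^ 2)) with hc_def
  set L : ℝ → ℝ := fun x => -c - (x - μ) ^ 2 / (2 * σ ^ 2) with hL_def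
  have hσ2 : σ ^ 2 ≠ 0 := by positivity
  have hq_pos : ∀ x, 0 < q x := maxent_gpdf_pos hσ
  have hq_int : Integrable q := maxent_integrable_gpdf hσ
  have hq_one : ∫ x, q x = 1 := maxent_integral_gpdf hσ
  have hq_sq_int : Integrable fun x => (x - μ) ^ 2 * q x := maxent_integrable_sq_gpdf hσ
  have hq_sq : ∫ x, (x - μ) ^ 2 * q x = σ ^ 2 := maxent_integral_sq_gpdf hσ
  have hlog : ∀ x, Real.log (q x) = L x := fun x => maxent_log_gpdf hσ x
  -- p * L
  have hpl_eq : (fun x => p x * L x) =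
      fun x => (-c) * p x + (-(1 / (2 * σ ^ 2))) * ((x - μ) ^ 2 * p x) := by
    funext x; simp only [hL_def]; ring
  have hpl_int : Integrable fun x => p x * L x := by
    rw [hpl_eq]; exact (hint.const_mul _).add (hvint.const_mul _)
  have hpl : ∫ x, p x * L x = -c - 1 / 2 := by
    rw [hpl_eq, integral_add (hint.const_mul _) (hvint.const_mul _),
      MeasureTheory.integral_const_mul, MeasureTheory.integral_const_mul, h1, hvar]
    field_simp
    ring
  -- q * L
  have hql_eq : (fun x => q x * L x) =
      fun x => (-c) * q x + (-(1 / (2 * σ ^ 2))) * ((x - μ) ^ 2 * q x) := by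
    funext x; simp only [hL_def]; ring
  have hql_int : Integrable fun x => q x * L x := by
    rw [hql_eq]; exact (hq_int.const_mul _).add (hq_sq_int.const_mul _)
  have hq_ent : ∫ x, q x * Real.log (q x) = -c - 1 / 2 := by
    have : (fun x => q x * Real.log (q x)) = fun x => q x * L x := by
      funext x; rw [hlog x]
    rw [this, hql_eq, integral_add (hq_int.const_mul _) (hq_sq_int.const_mul _),
      MeasureTheory.integral_const_mul, MeasureTheory.integral_const_mul, hq_one, hq_sq]
    field_simp
    ring
  -- the nonnegative function h
  set h : ℝ → ℝ := fun x => p x * Real.log (p x) - p x * L x - p x + q x with hh_def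
  have hh_int : Integrable h := ((hent.sub hpl_int).sub hint).add hq_int

  have hh_nonneg : ∀ x, 0 ≤ h x := by
    intro x
    have hk := (maxent_key_ineq (hp0 x) (hq_pos x)).1
    rw [hlog x] at hk
    exact hk
  have i1 : Integrable fun x => p x * Real.log (p x) - p x * L x := hent.sub hpl_int
  have i2 : Integrable fun x => p x * Real.log (p x) - p x * L x - p x := i1.sub hint
  have hh_sum : ∫ x, h x = (∫ x, p x * Real.log (p x)) - (-c - 1 / 2) := by
    calc ∫ x, h x
        = (∫ x, p x * Real.log (p x) - p x * L x - p x) + ∫ x, q x :=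
          integral_add i2 hq_int
      _ = ((∫ x, p x * Real.log (p x) - p x * L x) - ∫ x, p x) + ∫ x, q x := by
          rw [integral_sub i1 hint]
      _ = (((∫ x, p x * Real.log (p x)) - ∫ x, p x * L x) - ∫ x, p x) + ∫ x, q x := by
          rw [integral_sub hent hpl_int]
      _ = (∫ x, p x * Real.log (p x)) - (-c - 1 / 2) := by
          rw [hpl, h1, hq_one]; ring
  have h0 : 0 ≤ ∫ x, h x := integral_nonneg hh_nonneg
  refine ⟨by rw [hq_ent]; linarith [hh_sum ▸ h0], ?_⟩
  rw [hq_ent]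
  constructor
  · intro heq
    have hInt0 : ∫ x, h x = 0 := by rw [hh_sum]; linarith
    have hae := (integral_eq_zero_iff_of_nonneg hh_nonneg hh_int).mp hInt0
    filter_upwards [hae] with x hx
    have hx0 : h x = 0 := hx
    have hx' : p x * Real.log (p x) - p x * Real.log (q x) - p x + q x = 0 := by
      rw [hlog x]
      simpa [hh_def] using hx0
    exact (maxent_key_ineq (hp0 x) (hq_pos x)).2.mp hx'
  · intro heq
    have hzero : h =ᵐ[volume] 0 := by
      filter_upwards [heq] with x hx
      show p x * Real.log (p x) - p x * L x - p x + q x = 0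
      rw [hx, ← hlog x]
      ring
    have hInt0 : ∫ x, h x = 0 := by
      rw [integral_congr_ae hzero]
      simp
    rw [hh_sum] at hInt0
    linarith
end
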